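/- Fix real numbers D > 0 and λ₂ > 0, and define g : (0, ∞) → ℝ by g(M) = 1/√λ₂ if D² > 2Mλ₂, and g(M) = 2M√λ₂/(D·√(4Mλ₂ − D²)) if D² ≤ 2Mλ₂. Then g is convex on the interval (0, D²/λ₂] and concave on the interval [D²/λ₂, ∞). -/

import Mathlib

open Real Set

/-- The H∞ norm of the swing dynamics with phase cohesiveness output, as a
function of the uniform inertia constant `M`:
`g(M) = 1/√λ₂` if `D² > 2Mλ₂`, and `g(M) = 2M√λ₂/(D√(4Mλ₂ − D²))` if
`D² ≤ 2Mλ₂`. -/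
noncomputable def phaseHinfOfInertia (D lam2 M : ℝ) : ℝ :=
  if D ^ 2 ≤ 2 * M * lam2 then
    2 * M * Real.sqrt lam2 / (D * Real.sqrt (4 * M * lam2 - D ^ 2))
  else 1 / Real.sqrt lam2

lemma branch_hasDerivAt (D lam2 x : ℝ) (hD : 0 < D) (hx : D ^ 2 < 4 * x * lam2) :
    HasDerivAt (fun M => 2 * M * Real.sqrt lam2 / (D * Real.sqrt (4 * M * lam2 - D ^ 2)))
      (2 * Real.sqrt lam2 / D * (2 * lam2 * x - D ^ 2) / (Real.sqrt (4 * x * lam2 - D ^ 2)) ^ 3)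
      x := by
  have hs : 0 < 4 * x * lam2 - D ^ 2 := by linarith
  set r := Real.sqrt (4 * x * lam2 - D ^ 2) with hrdef
  have hr : 0 < r := Real.sqrt_pos.2 hs
  have hr2 : r ^ 2 = 4 * x * lam2 - D ^ 2 := Real.sq_sqrt hs.le
  have hi : HasDerivAt (fun M : ℝ => 4 * M * lam2 - D ^ 2) (4 * lam2) x := by
    simpa using (((hasDerivAt_id x).const_mul (4:ℝ)).mul_const lam2).sub_const (D ^ 2)
  have hsq : HasDerivAt (fun M => Real.sqrt (4 * M * lam2 - D ^ 2))
      (1 / (2 * r) * (4 * lam2)) x := by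
    exact (Real.hasDerivAt_sqrt (ne_of_gt hs)).comp x hi
  have hnum : HasDerivAt (fun M : ℝ => 2 * M * Real.sqrt lam2) (2 * Real.sqrt lam2) x := by
    simpa using (((hasDerivAt_id x).const_mul (2:ℝ)).mul_const (Real.sqrt lam2))
  have hden : HasDerivAt (fun M => D * Real.sqrt (4 * M * lam2 - D ^ 2))
      (D * (1 / (2 * r) * (4 * lam2))) x := hsq.const_mul D
  have hden0 : D * r ≠ 0 := by positivity
  have h := hnum.div hden hden0
  refine HasDerivAt.congr_deriv h ?_
  symm
  rw [← hrdef]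
  field_simp
  linear_combination (-(2:ℝ) * Real.sqrt lam2) * hr2

/-- Explicit derivative of `phaseHinfOfInertia` in `M`. -/
noncomputable def phaseHinfDeriv (D lam2 x : ℝ) : ℝ :=
  if 2 * lam2 * x ≤ D ^ 2 then 0
  else 2 * Real.sqrt lam2 / D * (2 * lam2 * x - D ^ 2) / (Real.sqrt (4 * x * lam2 - D ^ 2)) ^ 3

lemma phaseHinf_hasDerivAt (D lam2 x : ℝ) (hD : 0 < D) (hl : 0 < lam2) (hx : 0 < x) :
    HasDerivAt (phaseHinfOfInertia D lam2) (phaseHinfDeriv D lam2 x) x := by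
  rcases lt_trichotomy (2 * lam2 * x) (D ^ 2) with h2 | h2 | h2
  · -- constant region
    have hG : phaseHinfDeriv D lam2 x = 0 := if_pos h2.le
    rw [hG]
    have hop : IsOpen {y : ℝ | 2 * lam2 * y < D ^ 2} :=
      isOpen_lt (by continuity) continuous_const
    have hev : phaseHinfOfInertia D lam2 =ᶠ[nhds x] fun _ => 1 / Real.sqrt lam2 := by
      filter_upwards [hop.mem_nhds h2] with y hy
      exact if_neg (by nlinarith [hy])
    exact (hasDerivAt_const x _).congr_of_eventuallyEq hev
  · -- boundary point
    have hG : phaseHinfDeriv D lam2 x = 0 := if_pos h2.le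
    rw [hG]
    have h4 : D ^ 2 < 4 * x * lam2 := by nlinarith
    have hb := branch_hasDerivAt D lam2 x hD h4
    have hval0 : 2 * Real.sqrt lam2 / D * (2 * lam2 * x - D ^ 2) /
        (Real.sqrt (4 * x * lam2 - D ^ 2)) ^ 3 = 0 := by
      rw [show 2 * lam2 * x - D ^ 2 = 0 by linarith]; simp
    rw [hval0] at hb
    have hxval : phaseHinfOfInertia D lam2 x = 1 / Real.sqrt lam2 := by
      unfold phaseHinfOfInertia
      rw [if_pos (by nlinarith), show 4 * x * lam2 - D ^ 2 = D ^ 2 by nlinarith,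
        Real.sqrt_sq hD.le]
      have hsl : Real.sqrt lam2 ≠ 0 := by positivity
      field_simp
      nlinarith [Real.mul_self_sqrt hl.le]
    have hIci : HasDerivWithinAt (phaseHinfOfInertia D lam2) 0 (Set.Ici x) x := by
      refine hb.hasDerivWithinAt.congr (fun y hy => ?_) ?_
      · exact if_pos (by simp only [Set.mem_Ici] at hy; nlinarith)
      · exact if_pos (by nlinarith)
    have hIic : HasDerivWithinAt (phaseHinfOfInertia D lam2) 0 (Set.Iic x) x := by
      refine (hasDerivAt_const x (1 / Real.sqrt lam2)).hasDerivWithinAt.congr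
        (fun y hy => ?_) hxval
      simp only [Set.mem_Iic] at hy
      rcases eq_or_lt_of_le hy with rfl | hy'
      · exact hxval
      · exact if_neg (by nlinarith)
    have := hIic.union hIci
    rw [Set.Iic_union_Ici] at this
    exact this.hasDerivAt (by simp)
  · -- branch region
    have hG : phaseHinfDeriv D lam2 x = 2 * Real.sqrt lam2 / D * (2 * lam2 * x - D ^ 2) /
        (Real.sqrt (4 * x * lam2 - D ^ 2)) ^ 3 := if_neg (not_le.2 h2)
    rw [hG]
    have h4 : D ^ 2 < 4 * x * lam2 := by nlinarith
    have hop : IsOpen {y : ℝ | D ^ 2 < 2 * lam2 * y} :=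
      isOpen_lt continuous_const (by continuity)
    have hev : phaseHinfOfInertia D lam2 =ᶠ[nhds x]
        fun M => 2 * M * Real.sqrt lam2 / (D * Real.sqrt (4 * M * lam2 - D ^ 2)) := by
      filter_upwards [hop.mem_nhds h2] with y hy
      exact if_pos (by nlinarith [hy])
    exact (branch_hasDerivAt D lam2 x hD h4).congr_of_eventuallyEq hev

lemma key_mono (c p q : ℝ) (hc : 0 < c) (hp : 0 < p) (hpq : p ≤ q) (h3 : q ^ 2 ≤ 3 * c) :
    (p ^ 2 - c) * q ^ 3 ≤ (q ^ 2 - c) * p ^ 3 := by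
  have hq : 0 < q := lt_of_lt_of_le hp hpq
  have hpq3 : p * q ≤ 3 * c := le_trans (by nlinarith) h3
  have h2 : 0 ≤ c * (p ^ 2 + p * q + q ^ 2) - p ^ 2 * q ^ 2 := by
    nlinarith [mul_nonneg (mul_nonneg hp.le hq.le) (sub_nonneg.2 hpq3),
      mul_nonneg hc.le (sq_nonneg (p - q))]
  nlinarith [mul_nonneg (sub_nonneg.2 hpq) h2]

lemma key_anti (c p q : ℝ) (hc : 0 < c) (hp : 0 < p) (hpq : p ≤ q) (h3 : 3 * c ≤ p ^ 2) :
    (q ^ 2 - c) * p ^ 3 ≤ (p ^ 2 - c) * q ^ 3 := by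
  have hq : 0 < q := lt_of_lt_of_le hp hpq
  have h2 : 0 ≤ p ^ 2 * q ^ 2 - c * (p ^ 2 + p * q + q ^ 2) := by
    nlinarith [mul_nonneg (sub_nonneg.2 h3) (sq_nonneg q),
      mul_nonneg hc.le (mul_nonneg (sub_nonneg.2 hpq) (by positivity : (0:ℝ) ≤ 2 * q + p))]
  nlinarith [mul_nonneg (sub_nonneg.2 hpq) h2]

lemma phaseHinfDeriv_mono (D lam2 : ℝ) (hD : 0 < D) (hl : 0 < lam2) :
    MonotoneOn (phaseHinfDeriv D lam2) (Set.Ioo 0 (D ^ 2 / lam2)) := by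
  intro x hx y hy hxy
  unfold phaseHinfDeriv
  by_cases hy2 : 2 * lam2 * y ≤ D ^ 2
  · rw [if_pos hy2, if_pos (by nlinarith)]
  · rw [if_neg hy2]
    push_neg at hy2
    have hq0 : (0:ℝ) ≤ (Real.sqrt (4 * y * lam2 - D ^ 2)) ^ 3 := by positivity
    by_cases hx2 : 2 * lam2 * x ≤ D ^ 2
    · rw [if_pos hx2]
      exact div_nonneg (mul_nonneg (by positivity) (by nlinarith)) hq0
    · rw [if_neg hx2]
      push_neg at hx2
      set p := Real.sqrt (4 * x * lam2 - D ^ 2) with hpdef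
      set q := Real.sqrt (4 * y * lam2 - D ^ 2) with hqdef
      have hx4 : D ^ 2 < 4 * x * lam2 := by nlinarith [hx.1]
      have hy4 : D ^ 2 < 4 * y * lam2 := by nlinarith [hy.1]
      have hp : 0 < p := Real.sqrt_pos.2 (by linarith)
      have hq : 0 < q := Real.sqrt_pos.2 (by linarith)
      have hp2 : p ^ 2 = 4 * x * lam2 - D ^ 2 := Real.sq_sqrt (by linarith)
      have hq2 : q ^ 2 = 4 * y * lam2 - D ^ 2 := Real.sq_sqrt (by linarith)
      have hpq : p ≤ q := Real.sqrt_le_sqrt (by nlinarith)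
      have h3 : q ^ 2 ≤ 3 * D ^ 2 := by
        rw [hq2]
        have := hy.2
        rw [lt_div_iff₀ hl] at this
        nlinarith
      have hkey := key_mono (D ^ 2) p q (by positivity) hp hpq h3
      rw [div_le_div_iff₀ (by positivity) (by positivity)]
      have e1 : 2 * lam2 * x - D ^ 2 = (p ^ 2 - D ^ 2) / 2 := by rw [hp2]; ring
      have e2 : 2 * lam2 * y - D ^ 2 = (q ^ 2 - D ^ 2) / 2 := by rw [hq2]; ring
      rw [e1, e2]
      have hK : 0 ≤ 2 * Real.sqrt lam2 / D := by positivity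
      nlinarith [mul_le_mul_of_nonneg_left hkey hK]

lemma phaseHinfDeriv_anti (D lam2 : ℝ) (hD : 0 < D) (hl : 0 < lam2) :
    AntitoneOn (phaseHinfDeriv D lam2) (Set.Ioi (D ^ 2 / lam2)) := by
  intro x hx y hy hxy
  simp only [Set.mem_Ioi] at hx hy
  have hbx : D ^ 2 < lam2 * x := by nlinarith [(div_lt_iff₀ hl).1 hx]
  have hby : D ^ 2 < lam2 * y := by nlinarith [(div_lt_iff₀ hl).1 hy]
  unfold phaseHinfDeriv
  rw [if_neg (by nlinarith), if_neg (by nlinarith)]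
  set p := Real.sqrt (4 * x * lam2 - D ^ 2) with hpdef
  set q := Real.sqrt (4 * y * lam2 - D ^ 2) with hqdef
  have hx4 : D ^ 2 < 4 * x * lam2 := by nlinarith
  have hy4 : D ^ 2 < 4 * y * lam2 := by nlinarith
  have hp : 0 < p := Real.sqrt_pos.2 (by linarith)
  have hq : 0 < q := Real.sqrt_pos.2 (by linarith)
  have hp2 : p ^ 2 = 4 * x * lam2 - D ^ 2 := Real.sq_sqrt (by linarith)
  have hq2 : q ^ 2 = 4 * y * lam2 - D ^ 2 := Real.sq_sqrt (by linarith)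
  have hpq : p ≤ q := Real.sqrt_le_sqrt (by nlinarith)
  have h3 : 3 * D ^ 2 ≤ p ^ 2 := by rw [hp2]; nlinarith
  have hkey := key_anti (D ^ 2) p q (by positivity) hp hpq h3
  rw [div_le_div_iff₀ (by positivity) (by positivity)]
  have e1 : 2 * lam2 * x - D ^ 2 = (p ^ 2 - D ^ 2) / 2 := by rw [hp2]; ring
  have e2 : 2 * lam2 * y - D ^ 2 = (q ^ 2 - D ^ 2) / 2 := by rw [hq2]; ring
  rw [e1, e2]
  have hK : 0 ≤ 2 * Real.sqrt lam2 / D := by positivity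
  nlinarith [mul_le_mul_of_nonneg_left hkey hK]

/-- For fixed `D > 0` and `λ₂ > 0`, the map `M ↦ g(M)` is convex on
`(0, D²/λ₂]` and concave on `[D²/λ₂, ∞)`. -/
theorem phaseHinf_inertia_convexity (D lam2 : ℝ) (hD : 0 < D) (hl : 0 < lam2) :
    ConvexOn ℝ (Set.Ioc (0 : ℝ) (D ^ 2 / lam2)) (phaseHinfOfInertia D lam2) ∧
    ConcaveOn ℝ (Set.Ici (D ^ 2 / lam2)) (phaseHinfOfInertia D lam2) := by
  have hb0 : (0:ℝ) < D ^ 2 / lam2 := by positivity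
  constructor
  · refine MonotoneOn.convexOn_of_deriv (convex_Ioc _ _) ?_ ?_ ?_
    · intro x hx
      exact (phaseHinf_hasDerivAt D lam2 x hD hl hx.1).continuousAt.continuousWithinAt
    · rw [interior_Ioc]
      intro x hx
      exact (phaseHinf_hasDerivAt D lam2 x hD hl hx.1).differentiableAt.differentiableWithinAt
    · rw [interior_Ioc]
      intro x hx y hy hxy
      rw [(phaseHinf_hasDerivAt D lam2 x hD hl hx.1).deriv,
        (phaseHinf_hasDerivAt D lam2 y hD hl hy.1).deriv]
      exact phaseHinfDeriv_mono D lam2 hD hl hx hy hxy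
  · refine AntitoneOn.concaveOn_of_deriv (convex_Ici _) ?_ ?_ ?_
    · intro x hx
      exact (phaseHinf_hasDerivAt D lam2 x hD hl (lt_of_lt_of_le hb0 hx)).continuousAt.continuousWithinAt
    · rw [interior_Ici]
      intro x hx
      exact (phaseHinf_hasDerivAt D lam2 x hD hl (lt_trans hb0 hx)).differentiableAt.differentiableWithinAt
    · rw [interior_Ici]
      intro x hx y hy hxy
      rw [(phaseHinf_hasDerivAt D lam2 x hD hl (lt_trans hb0 hx)).deriv,
        (phaseHinf_hasDerivAt D lam2 y hD hl (lt_trans hb0 hy)).deriv]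
      exact phaseHinfDeriv_anti D lam2 hD hl hx hy hxy
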